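/- arXiv:2501.04629 — 8 statements merged into one kernel-verified Lean document; each statement's English description precedes it below -/
import Mathlib

section
/- Let L be a linear subspace of ℝⁿ, A : ℝⁿ → ℝⁿ a self-adjoint linear operator, and σ ∈ ℝ such that ⟨w, A w⟩ ≥ σ‖w‖² for all w ∈ L. Then there exists a self-adjoint linear operator B : ℝⁿ → ℝⁿ with ⟨w, B w⟩ = ⟨w, A w⟩ for all w ∈ L and ⟨w, B w⟩ ≥ σ‖w‖² for all w ∈ ℝⁿ. -/
open scoped RealInnerProductSpace
open ContinuousLinearMap

/-- A quadratic-form lower bound of a self-adjoint operator on a subspace `L` can be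
extended: there is a self-adjoint `B` agreeing with `A`'s quadratic form on `L` and
satisfying the same eigenvalue lower bound on the whole space. -/
theorem stmt1 (n : ℕ) (L : Submodule ℝ (EuclideanSpace ℝ (Fin n)))
    (A : EuclideanSpace ℝ (Fin n) →L[ℝ] EuclideanSpace ℝ (Fin n))
    (hA : IsSelfAdjoint A) (σ : ℝ)
    (h : ∀ w ∈ L, σ * ‖w‖ ^ 2 ≤ ⟪w, A w⟫) :
    ∃ B : EuclideanSpace ℝ (Fin n) →L[ℝ] EuclideanSpace ℝ (Fin n),
      IsSelfAdjoint B ∧ (∀ w ∈ L, ⟪w, B w⟫ = ⟪w, A w⟫) ∧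
      ∀ w, σ * ‖w‖ ^ 2 ≤ ⟪w, B w⟫ := by
  set P := L.subtypeL ∘L Submodule.orthogonalProjectionOnto L with hP
  set Q := Lᗮ.subtypeL ∘L Submodule.orthogonalProjectionOnto Lᗮ with hQ
  have hPsa : IsSelfAdjoint P := isSelfAdjoint_starProjection L
  have hQsa : IsSelfAdjoint Q := isSelfAdjoint_starProjection Lᗮ
  have hPin : ∀ x y, ⟪P x, y⟫ = ⟪x, P y⟫ := fun x y => hPsa.isSymmetric x y
  have hQin : ∀ x y, ⟪Q x, y⟫ = ⟪x, Q y⟫ := fun x y => hQsa.isSymmetric x y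
  have hAin : ∀ x y, ⟪A x, y⟫ = ⟪x, A y⟫ := fun x y => hA.isSymmetric x y
  have hPmem : ∀ w, P w ∈ L := fun w => (Submodule.orthogonalProjectionOnto L w).2
  have hQmem : ∀ w, Q w ∈ Lᗮ := fun w => (Submodule.orthogonalProjectionOnto Lᗮ w).2
  have hPw : ∀ w ∈ L, P w = w := fun w hw => Submodule.starProjection_eq_self_iff.2 hw
  have hQQ : ∀ w, Q (Q w) = Q w := fun w => Submodule.starProjection_eq_self_iff.2 (hQmem w)
  have hQw : ∀ w ∈ L, Q w = 0 := by
    intro w hw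
    show (↑(Submodule.orthogonalProjectionOnto Lᗮ w) : EuclideanSpace ℝ (Fin n)) = 0
    rw [Submodule.orthogonalProjectionOnto_apply_of_mem_orthogonal
      (L.le_orthogonal_orthogonal hw)]
    rfl
  have happ : ∀ w, (P ∘L A ∘L P + σ • Q) w = P (A (P w)) + σ • Q w := fun w => rfl
  have key : ∀ w, ⟪w, (P ∘L A ∘L P + σ • Q) w⟫ = ⟪P w, A (P w)⟫ + σ * ‖Q w‖ ^ 2 := by
    intro w
    have hQn : ⟪Q w, w⟫ = ‖Q w‖ ^ 2 := by
      conv_lhs => rw [← hQQ w]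
      rw [hQin, real_inner_self_eq_norm_sq]
    rw [happ, inner_add_right, real_inner_smul_right, ← hPin, ← hQin, hQn]
  refine ⟨P ∘L A ∘L P + σ • Q, ?_, ?_, ?_⟩
  · rw [isSelfAdjoint_iff_isSymmetric]
    intro x y
    show ⟪P (A (P x)) + σ • Q x, y⟫ = ⟪x, P (A (P y)) + σ • Q y⟫
    rw [inner_add_left, inner_add_right, real_inner_smul_left, real_inner_smul_right,
      hPin, hAin, hPin, hQin]
  · intro w hw
    rw [key w, hPw w hw, hQw w hw, norm_zero]
    ring
  · intro w
    have hsplit : ‖w‖ ^ 2 = ‖P w‖ ^ 2 + ‖Q w‖ ^ 2 := by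
      have := Submodule.norm_sq_eq_add_norm_sq_projection w L
      simpa [hP, hQ] using this
    have h3 : σ * ‖P w‖ ^ 2 ≤ ⟪P w, A (P w)⟫ := h (P w) (hPmem w)
    rw [key w, hsplit]
    nlinarith [sq_nonneg ‖Q w‖]
end

section
/- Let A be a symmetric n×n real matrix satisfying ⟨w, A w⟩ ≥ (s + 2μ)‖w‖² for all w ∈ ℝⁿ, where s, μ > 0, and let λ > 0. Then for all w, x ∈ ℝⁿ, (1/2)⟨x, A x⟩ + (1/λ)‖x − w‖² ≥ (1/λ)‖w‖² − (2/λ²)⟨w, (A + (2/λ)I)⁻¹ w⟩. -/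
open Matrix

/-- For a symmetric matrix `A` with `⟨w, A w⟩ ≥ (s+2μ)‖w‖²`, `s, μ > 0`, and `λ > 0`:
`(1/2)⟨x, A x⟩ + (1/λ)‖x − w‖² ≥ (1/λ)‖w‖² − (2/λ²)⟨w, (A + (2/λ)I)⁻¹ w⟩`. -/
theorem stmt3 (n : ℕ) (A : Matrix (Fin n) (Fin n) ℝ) (hA : A.IsSymm)
    (s μ lam : ℝ) (hs : 0 < s) (hμ : 0 < μ) (hlam : 0 < lam)
    (h : ∀ w : Fin n → ℝ, (s + 2 * μ) * (w ⬝ᵥ w) ≤ w ⬝ᵥ (A *ᵥ w)) :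
    ∀ w x : Fin n → ℝ,
      (1 / lam) * (w ⬝ᵥ w)
        - (2 / lam ^ 2) * (w ⬝ᵥ ((A + (2 / lam) • (1 : Matrix (Fin n) (Fin n) ℝ))⁻¹ *ᵥ w))
      ≤ (1 / 2) * (x ⬝ᵥ (A *ᵥ x)) + (1 / lam) * ((x - w) ⬝ᵥ (x - w)) := by
  intro w x
  set B : Matrix (Fin n) (Fin n) ℝ := A + (2 / lam) • (1 : Matrix (Fin n) (Fin n) ℝ) with hB
  have hBsymm : B.IsSymm := by
    rw [Matrix.IsSymm] at hA ⊢
    simp [hB, Matrix.transpose_add, Matrix.transpose_smul, hA]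
  have hBv : ∀ v : Fin n → ℝ, B *ᵥ v = A *ᵥ v + (2 / lam) • v := by
    intro v
    simp [hB, Matrix.add_mulVec, Matrix.smul_mulVec]
  have hBpd : B.PosDef := by
    rw [Matrix.posDef_iff_dotProduct_mulVec]
    constructor
    · rw [Matrix.IsHermitian]
      ext i j
      have := congrFun (congrFun hBsymm i) j
      simpa using this
    · intro v hv
      have hvv : 0 < v ⬝ᵥ v := by
        have hnn : 0 ≤ v ⬝ᵥ v := by
          simpa [dotProduct] using
            Finset.sum_nonneg fun i _ => mul_self_nonneg (v i)
        rcases lt_or_eq_of_le hnn with h' | h'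
        · exact h'
        · exact absurd ((dotProduct_self_eq_zero).mp h'.symm) hv
      have := h v
      have h2 : star v ⬝ᵥ B *ᵥ v = v ⬝ᵥ (A *ᵥ v) + (2 / lam) * (v ⬝ᵥ v) := by
        simp [hBv, dotProduct_add, dotProduct_smul, smul_eq_mul]
      rw [h2]
      have hpos : 0 < s + 2 * μ := by positivity
      nlinarith [div_pos (by norm_num : (0:ℝ) < 2) hlam]
  have hdet : IsUnit B.det := isUnit_iff_ne_zero.mpr hBpd.det_pos.ne'
  have hBB : ∀ v : Fin n → ℝ, B *ᵥ (B⁻¹ *ᵥ v) = v := by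
    intro v
    rw [Matrix.mulVec_mulVec, Matrix.mul_nonsing_inv B hdet, Matrix.one_mulVec]
  -- symmetry of dot products with B
  have hsym : ∀ u v : Fin n → ℝ, u ⬝ᵥ B *ᵥ v = (B *ᵥ u) ⬝ᵥ v := by
    intro u v
    rw [Matrix.dotProduct_mulVec, ← Matrix.mulVec_transpose, hBsymm]
  set y : Fin n → ℝ := (2 / lam) • w with hy
  set z : Fin n → ℝ := x - B⁻¹ *ᵥ y with hz
  have hzpos : 0 ≤ z ⬝ᵥ B *ᵥ z := by
    have := hBpd.posSemidef.dotProduct_mulVec_nonneg z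
    simpa using this
  have hexp : z ⬝ᵥ B *ᵥ z
      = x ⬝ᵥ B *ᵥ x - 2 * (x ⬝ᵥ y) + y ⬝ᵥ (B⁻¹ *ᵥ y) := by
    have h1 : x ⬝ᵥ B *ᵥ (B⁻¹ *ᵥ y) = x ⬝ᵥ y := by rw [hBB]
    have h2 : (B⁻¹ *ᵥ y) ⬝ᵥ B *ᵥ x = y ⬝ᵥ x := by
      rw [hsym, hBB]
    have h3 : (B⁻¹ *ᵥ y) ⬝ᵥ B *ᵥ (B⁻¹ *ᵥ y) = y ⬝ᵥ (B⁻¹ *ᵥ y) := by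
      rw [hsym, hBB, dotProduct_comm]
    rw [hz]
    rw [Matrix.mulVec_sub, sub_dotProduct, dotProduct_sub,
      dotProduct_sub, h1, h2, h3]
    rw [dotProduct_comm y x]
    ring
  have e1 : x ⬝ᵥ B *ᵥ x = x ⬝ᵥ (A *ᵥ x) + (2 / lam) * (x ⬝ᵥ x) := by
    simp [hBv, dotProduct_add, smul_eq_mul]
  have e2 : x ⬝ᵥ y = (2 / lam) * (x ⬝ᵥ w) := by
    simp [hy, dotProduct_smul, smul_eq_mul]
  have e3 : y ⬝ᵥ (B⁻¹ *ᵥ y) = (2 / lam) * (2 / lam) * (w ⬝ᵥ (B⁻¹ *ᵥ w)) := by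
    simp [hy, smul_dotProduct, Matrix.mulVec_smul, dotProduct_smul, smul_eq_mul]
    ring
  have e4 : (x - w) ⬝ᵥ (x - w) = x ⬝ᵥ x - 2 * (x ⬝ᵥ w) + w ⬝ᵥ w := by
    rw [sub_dotProduct, dotProduct_sub, dotProduct_sub,
      dotProduct_comm w x]
    ring
  rw [e1, e2, e3] at hexp
  rw [hexp] at hzpos
  rw [e4]
  have hl2 : (0:ℝ) < lam ^ 2 := by positivity
  have key : (1 / 2) * (x ⬝ᵥ (A *ᵥ x)) + (1 / lam) * (x ⬝ᵥ x - 2 * (x ⬝ᵥ w) + w ⬝ᵥ w)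
      - ((1 / lam) * (w ⬝ᵥ w) - (2 / lam ^ 2) * (w ⬝ᵥ (B⁻¹ *ᵥ w)))
      = (1/2) * (x ⬝ᵥ (A *ᵥ x) + (2 / lam) * (x ⬝ᵥ x)
          - 2 * ((2 / lam) * (x ⬝ᵥ w)) + (2 / lam) * (2 / lam) * (w ⬝ᵥ (B⁻¹ *ᵥ w))) := by
    field_simp
    ring
  linarith [hzpos, key.ge, key.le]
end

section
/- Let f_k : ℝⁿ → ℝ ∪ {∞} be lower semicontinuous functions, each positively homogeneous of degree 2 (f_k(tw) = t² f_k(w) for t > 0). Suppose for some μ ∈ ℝ and some function f with f(w) ≥ μ‖w‖² for all w: (a) for every w ∈ ℝⁿ and every sequence w_k → w, liminf_k f_k(w_k) ≥ f(w). Then for every δ > 0 there exists K such that for all k ≥ K and all w ∈ ℝⁿ, f_k(w) ≥ (μ − δ)‖w‖². -/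
open Filter Topology

private lemma ereal_mul_lt_coe {c b : ℝ} (hc : 0 < c) {x : EReal}
    (h : x < ((b : ℝ) : EReal)) : ((c : ℝ) : EReal) * x < ((c * b : ℝ) : EReal) := by
  induction x using EReal.rec with
  | bot =>
      rw [EReal.coe_mul_bot_of_pos hc]
      exact bot_lt_iff_ne_bot.2 (EReal.coe_ne_bot _)
  | coe y =>
      rw [← EReal.coe_mul]
      exact_mod_cast mul_lt_mul_of_pos_left (by exact_mod_cast h) hc
  | top => exact absurd h (by simp)

/-- Stability of uniform quadratic lower bounds under lower epi-convergence: if the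
`f_k` are l.s.c., positively homogeneous of degree 2, and satisfy the lower
epi-convergence inequality towards `f` with `f(w) ≥ μ‖w‖²`, then for every `δ > 0`
eventually `f_k(w) ≥ (μ − δ)‖w‖²` for all `w`. -/
theorem stmt6 (n : ℕ) (f : ℕ → EuclideanSpace ℝ (Fin n) → EReal)
    (hlsc : ∀ k, LowerSemicontinuous (f k))
    (hhom : ∀ k, ∀ t : ℝ, 0 < t → ∀ w, f k (t • w) = ((t ^ 2 : ℝ) : EReal) * f k w)
    (μ : ℝ) (flim : EuclideanSpace ℝ (Fin n) → EReal)
    (hbound : ∀ w, ((μ * ‖w‖ ^ 2 : ℝ) : EReal) ≤ flim w)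
    (ha : ∀ w, ∀ wk : ℕ → EuclideanSpace ℝ (Fin n), Tendsto wk atTop (𝓝 w) →
      flim w ≤ Filter.liminf (fun k => f k (wk k)) atTop) :
    ∀ δ > (0 : ℝ), ∃ K : ℕ, ∀ k ≥ K, ∀ w,
      (((μ - δ) * ‖w‖ ^ 2 : ℝ) : EReal) ≤ f k w := by
  intro δ hδ
  by_contra hcon
  push_neg at hcon
  -- reduce each counterexample to either a negative value at 0 or a bad unit vector
  have hfreq : ∃ᶠ k in atTop, (f k 0 < 0) ∨
      (∃ u : EuclideanSpace ℝ (Fin n), ‖u‖ = 1 ∧ f k u < ((μ - δ : ℝ) : EReal)) := by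
    rw [frequently_atTop]
    intro K
    obtain ⟨k, hk, w, hw⟩ := hcon K
    refine ⟨k, hk, ?_⟩
    by_cases hw0 : w = 0
    · left
      subst hw0
      simpa using hw
    · right
      have hr : (0 : ℝ) < ‖w‖ := norm_pos_iff.2 hw0
      refine ⟨‖w‖⁻¹ • w, by simp [norm_smul, inv_mul_cancel₀ hr.ne'], ?_⟩
      have h1 := hhom k ‖w‖⁻¹ (inv_pos.2 hr) w
      rw [h1]
      have h2 := ereal_mul_lt_coe (c := (‖w‖⁻¹) ^ 2) (by positivity) hw
      convert h2 using 2
      field_simp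
  rcases frequently_or_distrib.mp hfreq with hP | hQ
  · -- infinitely many k with f k 0 < 0 : contradiction with (a) at w = 0
    have hbot : ∃ᶠ k in atTop, f k 0 ≤ (⊥ : EReal) := by
      refine hP.mono fun k hk => ?_
      have h2 := hhom k 2 (by norm_num) 0
      rw [smul_zero] at h2
      -- f k 0 = 4 * f k 0 and f k 0 < 0 forces f k 0 = ⊥
      by_cases hb : f k 0 = ⊥
      · exact hb.le
      exfalso
      by_cases ht : f k 0 = ⊤
      · rw [ht] at hk; exact absurd hk (by simp)
      have hy := EReal.coe_toReal ht hb
      set y := (f k 0).toReal with hyd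
      rw [← hy, ← EReal.coe_mul] at h2
      rw [← hy] at hk
      have hy2 : y = (2:ℝ)^2 * y := by exact_mod_cast h2
      have hy0 : y = 0 := by linarith
      rw [hy0] at hk
      exact lt_irrefl _ (by exact_mod_cast hk)
    have hlim : Filter.liminf (fun k => f k 0) atTop ≤ ⊥ :=
      Filter.liminf_le_of_frequently_le' hbot
    have h0 : ((0 : ℝ) : EReal) ≤ flim 0 := by simpa using hbound 0
    have := (h0.trans ((ha 0 (fun _ => 0) tendsto_const_nhds).trans hlim))
    exact absurd this (by simp)
  · -- extract a subsequence of bad unit vectors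
    obtain ⟨φ, hφ, hbad⟩ := Filter.extraction_of_frequently_atTop hQ
    choose u hu hfu using hbad
    have hmem : ∀ j, u j ∈ Metric.sphere (0 : EuclideanSpace ℝ (Fin n)) 1 := by
      intro j; simpa [mem_sphere_zero_iff_norm] using hu j
    obtain ⟨a, ha', ψ, hψ, hua⟩ :=
      (isCompact_sphere (0 : EuclideanSpace ℝ (Fin n)) 1).tendsto_subseq hmem
    have hanorm : ‖a‖ = 1 := mem_sphere_zero_iff_norm.mp ha'
    set σ : ℕ → ℕ := φ ∘ ψ with hσ
    have hσmono : StrictMono σ := hφ.comp hψ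
    -- build the full sequence
    classical
    set g : ℕ → EuclideanSpace ℝ (Fin n) :=
      fun k => if h : ∃ j, σ j = k then u (ψ h.choose) else a with hg
    have hgval : ∀ j, g (σ j) = u (ψ j) := by
      intro j
      have h : ∃ j', σ j' = σ j := ⟨j, rfl⟩
      have : h.choose = j := hσmono.injective h.choose_spec
      simp only [hg, dif_pos h, this]
    have hgt : Tendsto g atTop (𝓝 a) := by
      rw [Metric.tendsto_atTop] at hua ⊢
      intro ε hε
      obtain ⟨J, hJ⟩ := hua ε hε
      refine ⟨σ J, fun k hk => ?_⟩
      by_cases h : ∃ j, σ j = k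
      · have hj := h.choose_spec
        have : J ≤ h.choose := by
          rw [← hσmono.le_iff_le, hj]; exact hk
        simpa [hg, dif_pos h] using hJ _ this
      · simpa [hg, dif_neg h] using hε
    have hfreq2 : ∃ᶠ k in atTop, f k (g k) ≤ ((μ - δ : ℝ) : EReal) := by
      rw [frequently_atTop]
      intro K
      exact ⟨σ K, hσmono.id_le K, by rw [hgval]; exact (hfu (ψ K)).le⟩
    have hlim : Filter.liminf (fun k => f k (g k)) atTop ≤ ((μ - δ : ℝ) : EReal) :=
      Filter.liminf_le_of_frequently_le' hfreq2
    have h1 : ((μ : ℝ) : EReal) ≤ flim a := by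
      have := hbound a
      rwa [hanorm, one_pow, mul_one] at this
    have h2 := (ha a g hgt).trans hlim
    have := h1.trans h2
    have : (μ : ℝ) ≤ μ - δ := by exact_mod_cast this
    linarith
end

section
/- Let f : ℝⁿ → ℝ ∪ {∞} be proper and lower semicontinuous, x̄ ∈ dom f, v̄ ∈ ℝⁿ, and μ > κ. If d²f(x̄|v̄)(w) ≥ μ‖w‖² for all w ∈ ℝⁿ, then there is a neighborhood U of x̄ such that f(x) ≥ f(x̄) + ⟨v̄, x − x̄⟩ + (κ/2)‖x − x̄‖² for all x ∈ U. -/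
open Filter Topology
open scoped RealInnerProductSpace

/-- The second-order difference quotient
`Δ_t²f(x|v)(w) = (f(x + t w) − f(x) − t⟨v, w⟩)/((1/2)t²)`, written as
multiplication by `2/t²` in the extended reals. -/
noncomputable def secondQuot {n : ℕ} (f : EuclideanSpace ℝ (Fin n) → EReal)
    (x v : EuclideanSpace ℝ (Fin n)) (t : ℝ) (w : EuclideanSpace ℝ (Fin n)) : EReal :=
  ((2 / t ^ 2 : ℝ) : EReal) * (f (x + t • w) - f x - ((t * ⟪v, w⟫ : ℝ) : EReal))

/-- The second-order subderivative
`d²f(x|v)(w) = liminf_{t↓0, w'→w} Δ_t²f(x|v)(w')`. -/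
noncomputable def d2 {n : ℕ} (f : EuclideanSpace ℝ (Fin n) → EReal)
    (x v : EuclideanSpace ℝ (Fin n)) (w : EuclideanSpace ℝ (Fin n)) : EReal :=
  Filter.liminf (fun p : ℝ × EuclideanSpace ℝ (Fin n) => secondQuot f x v p.1 p.2)
    ((𝓝[>] (0 : ℝ)) ×ˢ 𝓝 w)

/-- A positive-definite second-order subderivative with modulus `μ > κ` implies local
second-order growth with modulus `κ`. -/
theorem stmt9 (n : ℕ) (f : EuclideanSpace ℝ (Fin n) → EReal)
    (hproper : ∃ x, f x ≠ ⊤) (hnebot : ∀ x, f x ≠ ⊥)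
    (hlsc : LowerSemicontinuous f)
    (xb vb : EuclideanSpace ℝ (Fin n)) (hdom : f xb ≠ ⊤) (κ μ : ℝ) (hμκ : κ < μ)
    (hd2 : ∀ w, ((μ * ‖w‖ ^ 2 : ℝ) : EReal) ≤ d2 f xb vb w) :
    ∃ U ∈ 𝓝 xb, ∀ x ∈ U,
      f xb + ((⟪vb, x - xb⟫ + (κ / 2) * ‖x - xb‖ ^ 2 : ℝ) : EReal) ≤ f x := by
  classical
  obtain ⟨b, hb⟩ : ∃ b : ℝ, f xb = (b : EReal) :=
    ⟨(f xb).toReal, (EReal.coe_toReal hdom (hnebot xb)).symm⟩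
  -- trivial case x = xb
  have triv : f xb + ((⟪vb, xb - xb⟫ + (κ / 2) * ‖xb - xb‖ ^ 2 : ℝ) : EReal) ≤ f xb := by
    simp
  -- pointwise step
  have step : ∀ x : EuclideanSpace ℝ (Fin n), x ≠ xb →
      (κ : EReal) < secondQuot f xb vb (‖x - xb‖) ((‖x - xb‖)⁻¹ • (x - xb)) →
      f xb + ((⟪vb, x - xb⟫ + (κ / 2) * ‖x - xb‖ ^ 2 : ℝ) : EReal) ≤ f x := by
    intro x hx hq
    set t := ‖x - xb‖ with htdef
    have ht0 : 0 < t := norm_pos_iff.mpr (sub_ne_zero.mpr hx)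
    set w : EuclideanSpace ℝ (Fin n) := t⁻¹ • (x - xb) with hwdef
    have hxt : xb + t • w = x := by
      rw [hwdef, smul_smul, mul_inv_cancel₀ ht0.ne', one_smul]
      abel
    rcases eq_or_ne (f x) ⊤ with hfx | hfx
    · rw [hfx]; exact le_top
    obtain ⟨a, ha⟩ : ∃ a : ℝ, f x = (a : EReal) :=
      ⟨(f x).toReal, (EReal.coe_toReal hfx (hnebot x)).symm⟩
    unfold secondQuot at hq
    rw [hxt, ha, hb] at hq
    have hcoe : ((2 / t ^ 2 : ℝ) : EReal) * ((a : EReal) - (b : EReal)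
        - ((t * ⟪vb, w⟫ : ℝ) : EReal))
        = ((2 / t ^ 2 * (a - b - t * ⟪vb, w⟫) : ℝ) : EReal) := by
      rw [← EReal.coe_sub, ← EReal.coe_sub, ← EReal.coe_mul]
    rw [hcoe, EReal.coe_lt_coe_iff] at hq
    have hip : ⟪vb, x - xb⟫ = t * ⟪vb, w⟫ := by
      rw [hwdef, inner_smul_right, ← mul_assoc, mul_inv_cancel₀ ht0.ne', one_mul]
    have hq' : κ * t ^ 2 < 2 * (a - b - t * ⟪vb, w⟫) := by
      have h2 : (0 : ℝ) < t ^ 2 := by positivity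
      rw [div_mul_eq_mul_div, lt_div_iff₀ h2] at hq
      linarith
    rw [hb, ha, ← EReal.coe_add, EReal.coe_le_coe_iff, hip]
    nlinarith [hq']
  -- the key uniform estimate near each sphere point
  have key : ∀ w : EuclideanSpace ℝ (Fin n), w ∈ Metric.sphere (0 : EuclideanSpace ℝ (Fin n)) 1 →
      ∃ V ∈ 𝓝 w, ∃ ε > (0 : ℝ), ∀ t ∈ Set.Ioo (0 : ℝ) ε, ∀ w' ∈ V,
        (κ : EReal) < secondQuot f xb vb t w' := by
    intro w hw
    have hw1 : ‖w‖ = 1 := by simpa using hw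
    have hlt : (κ : EReal) < d2 f xb vb w := by
      refine lt_of_lt_of_le ?_ (hd2 w)
      rw [hw1]
      exact_mod_cast (by linarith : κ < μ * 1 ^ 2)
    have hev : ∀ᶠ p : ℝ × EuclideanSpace ℝ (Fin n) in (𝓝[>] (0 : ℝ)) ×ˢ 𝓝 w,
        (κ : EReal) < secondQuot f xb vb p.1 p.2 :=
      eventually_lt_of_lt_liminf hlt
    rw [Filter.eventually_iff, Filter.mem_prod_iff] at hev
    obtain ⟨s, hs, V, hV, hsub⟩ := hev
    rw [mem_nhdsGT_iff_exists_Ioo_subset] at hs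
    obtain ⟨ε, hε, hIoo⟩ := hs
    exact ⟨V, hV, ε, hε, fun t ht w' hw' => hsub (Set.mk_mem_prod (hIoo ht) hw')⟩
  choose V hV ε hε hP using key
  obtain ⟨T, hT⟩ := (isCompact_sphere (0 : EuclideanSpace ℝ (Fin n)) 1).elim_nhds_subcover' V hV
  rcases T.eq_empty_or_nonempty with hTe | hTne
  · -- the sphere is empty: the space is a single point
    have hsub : ∀ x : EuclideanSpace ℝ (Fin n), x = xb := by
      intro x
      by_contra hx
      have hmem : (‖x - xb‖⁻¹ • (x - xb)) ∈ Metric.sphere (0 : EuclideanSpace ℝ (Fin n)) 1 := by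
        have h0 : x - xb ≠ 0 := sub_ne_zero.mpr hx
        rw [mem_sphere_zero_iff_norm, norm_smul, norm_inv, norm_norm,
          inv_mul_cancel₀ (norm_ne_zero_iff.mpr h0)]
      have := hT hmem
      simp [hTe] at this
    refine ⟨Set.univ, Filter.univ_mem, fun x _ => ?_⟩
    rw [hsub x]
    exact triv
  · set ε₀ := T.inf' hTne (fun p => ε p.1 p.2) with hε₀def
    have hε₀ : 0 < ε₀ := (Finset.lt_inf'_iff hTne).mpr fun p _ => hε p.1 p.2
    refine ⟨Metric.ball xb ε₀, Metric.ball_mem_nhds _ hε₀, fun x hx => ?_⟩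
    rcases eq_or_ne x xb with rfl | hxne
    · exact triv
    · apply step x hxne
      set t := ‖x - xb‖ with htdef
      have ht0 : 0 < t := norm_pos_iff.mpr (sub_ne_zero.mpr hxne)
      set w : EuclideanSpace ℝ (Fin n) := t⁻¹ • (x - xb) with hwdef
      have hwS : w ∈ Metric.sphere (0 : EuclideanSpace ℝ (Fin n)) 1 := by
        rw [hwdef, mem_sphere_zero_iff_norm, norm_smul, norm_inv, norm_norm,
          inv_mul_cancel₀ ht0.ne']
      obtain ⟨p, hpT, hpV⟩ : ∃ p ∈ T, w ∈ V p.1 p.2 := by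
        have := hT hwS
        simpa using this
      have htε : t < ε p.1 p.2 := by
        have h1 : t < ε₀ := by
          have := Metric.mem_ball.mp hx
          rwa [dist_eq_norm] at this
        exact lt_of_lt_of_le h1 (Finset.inf'_le _ hpT)
      exact hP p.1 p.2 t ⟨ht0, htε⟩ w hpV
end

section
/- Let g : ℝⁿ → ℝ ∪ {∞} be finite at x̄ with v̄ ∈ ℝⁿ, and let f : ℝⁿ → ℝ be differentiable near x̄ and twice differentiable at x̄. Then for all w ∈ ℝⁿ, d²(f+g)(x̄ | ∇f(x̄) + v̄)(w) = ⟨w, ∇²f(x̄) w⟩ + d²g(x̄|v̄)(w). -/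
open Filter Topology
open scoped RealInnerProductSpace

private lemma ereal_split (G : EReal) (a b c1 g0 c2 : ℝ) :
    (a : EReal) + G - ((b : EReal) + (g0 : EReal)) - ((c1 + c2 : ℝ) : EReal)
      = ((a - b - c1 : ℝ) : EReal) + (G - (g0 : EReal) - ((c2 : ℝ) : EReal)) := by
  induction G using EReal.rec with
  | bot => simp [sub_eq_add_neg]
  | coe x => norm_cast; ring
  | top =>
      simp only [sub_eq_add_neg, ← EReal.coe_add, ← EReal.coe_neg,
        EReal.add_top_of_ne_bot (EReal.coe_ne_bot _), EReal.top_add_coe,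
        EReal.coe_add_top]

private lemma ereal_coe_mul_add {r : ℝ} (hr : 0 < r) (X Y : EReal) :
    (r : EReal) * (X + Y) = (r : EReal) * X + (r : EReal) * Y := by
  have hb : (r : EReal) * ⊥ = ⊥ := EReal.coe_mul_bot_of_pos hr
  have ht : (r : EReal) * ⊤ = ⊤ := EReal.coe_mul_top_of_pos hr
  induction X using EReal.rec with
  | bot => simp [EReal.bot_add, EReal.add_bot, hb]
  | top =>
      induction Y using EReal.rec with
      | bot => simp [EReal.add_bot, hb, ht]
      | coe y =>
          rw [EReal.top_add_coe, ht, ← EReal.coe_mul, EReal.top_add_coe]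
      | top => simp [ht]
  | coe x =>
      induction Y using EReal.rec with
      | bot => simp [EReal.add_bot, hb]
      | coe y => norm_cast; ring
      | top =>
          rw [EReal.coe_add_top, ht, ← EReal.coe_mul, EReal.coe_add_top]

private lemma liminf_coe_add {α : Type*} {l : Filter α} [l.NeBot] {A : α → ℝ} {B : α → EReal}
    {c : ℝ} (hA : Tendsto (fun x => ((A x : ℝ) : EReal)) l (𝓝 ((c : ℝ) : EReal))) :
    Filter.liminf (fun x => ((A x : ℝ) : EReal) + B x) l
      = ((c : ℝ) : EReal) + Filter.liminf B l := by
  have h1 : Filter.liminf (fun x => ((A x : ℝ) : EReal)) l = ((c : ℝ) : EReal) := hA.liminf_eq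
  have h2 : Filter.limsup (fun x => ((A x : ℝ) : EReal)) l = ((c : ℝ) : EReal) := hA.limsup_eq
  apply le_antisymm
  · have h := EReal.liminf_add_le (u := fun x => ((A x : ℝ) : EReal)) (v := B) (f := l)
      (Or.inl (h2 ▸ EReal.coe_ne_bot c)) (Or.inl (h2 ▸ EReal.coe_ne_top c))
    rw [h2] at h
    exact h
  · have h := EReal.le_liminf_add (u := fun x => ((A x : ℝ) : EReal)) (v := B) (f := l)
    rw [h1] at h
    exact h

/-- Sum rule for second-order subderivatives: if `f` is differentiable near `x̄` with
gradient `gf` continuous at `x̄` (strict differentiability), twice differentiable at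
`x̄` with Hessian `H` (second-order Taylor expansion), and `g` is finite at `x̄`, then
`d²(f+g)(x̄ | ∇f(x̄)+v̄)(w) = ⟨w, H w⟩ + d²g(x̄|v̄)(w)`. -/
theorem stmt10 (n : ℕ) (g : EuclideanSpace ℝ (Fin n) → EReal)
    (xb vb : EuclideanSpace ℝ (Fin n)) (hgfin : g xb ≠ ⊤ ∧ g xb ≠ ⊥)
    (f : EuclideanSpace ℝ (Fin n) → ℝ)
    (gf : EuclideanSpace ℝ (Fin n) → EuclideanSpace ℝ (Fin n))
    (hdiff : ∀ᶠ x in 𝓝 xb, HasGradientAt f (gf x) x)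
    (hcont : ContinuousAt gf xb)
    (H : EuclideanSpace ℝ (Fin n) →L[ℝ] EuclideanSpace ℝ (Fin n))
    (hH : IsSelfAdjoint H)
    (htaylor : (fun u => f (xb + u) - f xb - ⟪gf xb, u⟫ - (1 / 2) * ⟪u, H u⟫)
      =o[𝓝 (0 : EuclideanSpace ℝ (Fin n))] fun u => ‖u‖ ^ 2) :
    ∀ w, d2 (fun x => (f x : EReal) + g x) xb (gf xb + vb) w
      = ((⟪w, H w⟫ : ℝ) : EReal) + d2 g xb vb w := by
  intro w
  classical
  set l : Filter (ℝ × EuclideanSpace ℝ (Fin n)) := (𝓝[>] (0 : ℝ)) ×ˢ 𝓝 w with hl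
  haveI : l.NeBot := by rw [hl]; infer_instance
  obtain ⟨hgt, hgb⟩ := hgfin
  set g0 : ℝ := (g xb).toReal with hg0def
  have hg0 : ((g0 : ℝ) : EReal) = g xb := EReal.coe_toReal hgt hgb
  set R : EuclideanSpace ℝ (Fin n) → ℝ := fun u => f (xb + u) - f xb - ⟪gf xb, u⟫ - (1 / 2) * ⟪u, H u⟫ with hRdef
  set A : ℝ × EuclideanSpace ℝ (Fin n) → ℝ :=
    fun p => (2 / p.1 ^ 2) * (f (xb + p.1 • p.2) - f xb - p.1 * ⟪gf xb, p.2⟫) with hAdef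
  have hpos : ∀ᶠ p : ℝ × EuclideanSpace ℝ (Fin n) in l, 0 < p.1 := by
    rw [hl]
    exact Filter.Eventually.prod_inl (eventually_mem_nhdsWithin) _
  -- splitting of the second-order quotient
  have hsplit : ∀ᶠ p : ℝ × EuclideanSpace ℝ (Fin n) in l,
      secondQuot (fun x => (f x : EReal) + g x) xb (gf xb + vb) p.1 p.2
        = ((A p : ℝ) : EReal) + secondQuot g xb vb p.1 p.2 := by
    filter_upwards [hpos] with p hp
    obtain ⟨t, w'⟩ := p
    simp only at hp
    have ht2 : (0 : ℝ) < 2 / t ^ 2 := by positivity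
    show ((2 / t ^ 2 : ℝ) : EReal) * ((f (xb + t • w') : EReal) + g (xb + t • w')
          - ((f xb : EReal) + g xb) - ((t * ⟪gf xb + vb, w'⟫ : ℝ) : EReal))
        = ((A (t, w') : ℝ) : EReal) + ((2 / t ^ 2 : ℝ) : EReal) *
          (g (xb + t • w') - g xb - ((t * ⟪vb, w'⟫ : ℝ) : EReal))
    rw [← hg0]
    have hinner : (⟪gf xb + vb, w'⟫ : ℝ) = ⟪gf xb, w'⟫ + ⟪vb, w'⟫ := inner_add_left _ _ _
    rw [hinner, mul_add]
    rw [ereal_split (g (xb + t • w')) (f (xb + t • w')) (f xb) (t * ⟪gf xb, w'⟫) g0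
      (t * ⟪vb, w'⟫)]
    rw [ereal_coe_mul_add ht2, ← EReal.coe_mul]
  -- the quadratic term tends to ⟪w, H w⟫
  have hsndl : Filter.Tendsto (fun p : ℝ × EuclideanSpace ℝ (Fin n) => p.2) l (𝓝 w) := by
    rw [hl]; exact tendsto_snd
  have hfstl : Filter.Tendsto (fun p : ℝ × EuclideanSpace ℝ (Fin n) => p.1) l (𝓝 0) := by
    rw [hl]; exact tendsto_fst.mono_right nhdsWithin_le_nhds
  have hm : Filter.Tendsto (fun p : ℝ × EuclideanSpace ℝ (Fin n) => p.1 • p.2) l (𝓝 0) := by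
    have := hfstl.smul hsndl
    rwa [zero_smul] at this
  have hφ : Filter.Tendsto (fun u : EuclideanSpace ℝ (Fin n) => if u = 0 then (0 : ℝ) else |R u| / ‖u‖ ^ 2)
      (𝓝 0) (𝓝 0) := by
    rw [NormedAddCommGroup.tendsto_nhds_zero]
    intro ε hε
    have hb := htaylor.def (half_pos hε)
    filter_upwards [hb] with u hu
    by_cases h0 : u = 0
    · simpa [h0] using hε
    · rw [if_neg h0]
      have hu2 : (0 : ℝ) < ‖u‖ ^ 2 := by
        have := norm_pos_iff.mpr h0
        positivity
      have : |R u| / ‖u‖ ^ 2 ≤ ε / 2 := by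
        rw [div_le_iff₀ hu2]
        calc |R u| = ‖R u‖ := (Real.norm_eq_abs _).symm
          _ ≤ ε / 2 * ‖‖u‖ ^ 2‖ := hu
          _ = ε / 2 * ‖u‖ ^ 2 := by rw [Real.norm_eq_abs, abs_of_nonneg (by positivity)]
      have hnn : (0 : ℝ) ≤ |R u| / ‖u‖ ^ 2 := by positivity
      calc ‖|R u| / ‖u‖ ^ 2‖ = |R u| / ‖u‖ ^ 2 := by
            rw [Real.norm_eq_abs, abs_of_nonneg hnn]
        _ ≤ ε / 2 := this
        _ < ε := half_lt_self hε
  have hφl : Filter.Tendsto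
      (fun p : ℝ × EuclideanSpace ℝ (Fin n) => if p.1 • p.2 = 0 then (0 : ℝ) else |R (p.1 • p.2)| / ‖p.1 • p.2‖ ^ 2)
      l (𝓝 0) := hφ.comp hm
  have hbound : Filter.Tendsto
      (fun p : ℝ × EuclideanSpace ℝ (Fin n) => 2 * ‖p.2‖ ^ 2 *
        (if p.1 • p.2 = 0 then (0 : ℝ) else |R (p.1 • p.2)| / ‖p.1 • p.2‖ ^ 2)) l (𝓝 0) := by
    have h2 : Filter.Tendsto (fun p : ℝ × EuclideanSpace ℝ (Fin n) => 2 * ‖p.2‖ ^ 2) l (𝓝 (2 * ‖w‖ ^ 2)) :=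
      (tendsto_const_nhds.mul ((hsndl.norm).pow 2))
    have := h2.mul hφl
    rwa [mul_zero] at this
  have hE : Filter.Tendsto (fun p : ℝ × EuclideanSpace ℝ (Fin n) => (2 / p.1 ^ 2) * R (p.1 • p.2)) l (𝓝 0) := by
    apply squeeze_zero_norm' _ hbound
    filter_upwards [hpos] with p hp
    by_cases h0 : p.2 = 0
    · have : p.1 • p.2 = 0 := by rw [h0, smul_zero]
      rw [h0] at this ⊢
      rw [smul_zero] at *
      have hR0 : R 0 = 0 := by simp [hRdef]
      simp [hR0, this]
    · have hsm : p.1 • p.2 ≠ 0 := smul_ne_zero (ne_of_gt hp) h0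
      rw [if_neg hsm]
      have h1 : p.1 ≠ 0 := ne_of_gt hp
      have h2 : ‖p.2‖ ≠ 0 := norm_ne_zero_iff.mpr h0
      have hn : ‖p.1 • p.2‖ ^ 2 = p.1 ^ 2 * ‖p.2‖ ^ 2 := by
        rw [norm_smul, mul_pow, Real.norm_eq_abs, sq_abs]
      rw [hn, Real.norm_eq_abs, abs_mul,
        abs_of_nonneg (le_of_lt (by positivity : (0:ℝ) < 2 / p.1 ^ 2))]
      apply le_of_eq
      field_simp
  have hQ : Filter.Tendsto (fun p : ℝ × EuclideanSpace ℝ (Fin n) => ⟪p.2, H p.2⟫) l (𝓝 (⟪w, H w⟫ : ℝ)) :=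
    hsndl.inner (((H.continuous.tendsto w)).comp hsndl)
  have hAeq : ∀ᶠ p : ℝ × EuclideanSpace ℝ (Fin n) in l, A p = (2 / p.1 ^ 2) * R (p.1 • p.2) + ⟪p.2, H p.2⟫ := by
    filter_upwards [hpos] with p hp
    have hR : R (p.1 • p.2) = f (xb + p.1 • p.2) - f xb - p.1 * ⟪gf xb, p.2⟫
        - (1 / 2) * (p.1 * (p.1 * ⟪p.2, H p.2⟫)) := by
      rw [hRdef]
      simp only
      rw [real_inner_smul_left, map_smul, real_inner_smul_right, real_inner_smul_right]
      try ring
    rw [hAdef]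
    simp only
    rw [hR]
    have ht : p.1 ≠ 0 := ne_of_gt hp
    field_simp
    try ring
  have hAtend : Filter.Tendsto A l (𝓝 (⟪w, H w⟫ : ℝ)) := by
    have := hE.add hQ
    rw [zero_add] at this
    exact this.congr' (hAeq.mono fun p h => h.symm)
  have hAcoe : Filter.Tendsto (fun p : ℝ × EuclideanSpace ℝ (Fin n) => ((A p : ℝ) : EReal)) l
      (𝓝 ((⟪w, H w⟫ : ℝ) : EReal)) := EReal.tendsto_coe.mpr hAtend
  unfold d2
  rw [← hl, Filter.liminf_congr hsplit]
  exact liminf_coe_add hAcoe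
end

section
/- Let f : ℝⁿ → ℝ be C^{1,1} (continuously differentiable with locally Lipschitz gradient) near x̄ and strongly convex with modulus s > 0 on a neighborhood U of x̄, i.e., f(x') ≥ f(x) + ⟨∇f(x), x' − x⟩ + (s/2)‖x' − x‖² for all x, x' ∈ U. Then every matrix H in the Hessian bundle of f at x̄ satisfies ⟨w, H w⟩ ≥ s‖w‖² for all w ∈ ℝⁿ. -/
open Filter Topology
open scoped RealInnerProductSpace

/-- The Hessian bundle of `f` at `x`: all limits `H` of Hessians `∇²f(x_k)` along
sequences `x_k → x` of points where the gradient of `f` is differentiable. -/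
def hessBundle {n : ℕ} (f : EuclideanSpace ℝ (Fin n) → ℝ)
    (x : EuclideanSpace ℝ (Fin n)) :
    Set (EuclideanSpace ℝ (Fin n) →L[ℝ] EuclideanSpace ℝ (Fin n)) :=
  {H | ∃ xk : ℕ → EuclideanSpace ℝ (Fin n),
    Tendsto xk atTop (𝓝 x) ∧
    (∀ k, DifferentiableAt ℝ (gradient f) (xk k)) ∧
    Tendsto (fun k => fderiv ℝ (gradient f) (xk k)) atTop (𝓝 H)}

/-- If `f` is `C^{1,1}` near `x̄` and strongly convex with modulus `s > 0` on a
neighborhood `U` of `x̄`, then every member of the Hessian bundle of `f` at `x̄` is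
positive-definite with modulus `s`. -/
theorem stmt12 (n : ℕ) (f : EuclideanSpace ℝ (Fin n) → ℝ)
    (xb : EuclideanSpace ℝ (Fin n))
    (U : Set (EuclideanSpace ℝ (Fin n))) (hU : U ∈ 𝓝 xb) (K : NNReal)
    (hdiff : ∀ x ∈ U, HasGradientAt f (gradient f x) x)
    (hlip : LipschitzOnWith K (gradient f) U)
    (s : ℝ) (hs : 0 < s)
    (hconv : ∀ x ∈ U, ∀ x' ∈ U,
      f x + ⟪gradient f x, x' - x⟫ + (s / 2) * ‖x' - x‖ ^ 2 ≤ f x') :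
    ∀ H ∈ hessBundle f xb, ∀ w, s * ‖w‖ ^ 2 ≤ ⟪w, H w⟫ := by
  intro H hH w
  obtain ⟨xk, hxk, hdk, hHk⟩ := hH
  set g := gradient f with hg
  -- strong monotonicity of the gradient on U
  have mono : ∀ x ∈ U, ∀ x' ∈ U, s * ‖x' - x‖ ^ 2 ≤ ⟪g x' - g x, x' - x⟫ := by
    intro x hx x' hx'
    have h1 := hconv x hx x' hx'
    have h2 := hconv x' hx' x hx
    have e1 : ⟪g x', x - x'⟫ = -⟪g x', x' - x⟫ := by
      rw [← inner_neg_right]; congr 1; abel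
    have e2 : ‖x - x'‖ = ‖x' - x‖ := norm_sub_rev _ _
    have e3 : ⟪g x' - g x, x' - x⟫ = ⟪g x', x' - x⟫ - ⟪g x, x' - x⟫ :=
      inner_sub_left _ _ _
    rw [e1, e2] at h2
    rw [e3]
    linarith
  -- pointwise bound at points of `interior U` where `g` is differentiable
  have key : ∀ x, x ∈ interior U → DifferentiableAt ℝ g x →
      s * ‖w‖ ^ 2 ≤ ⟪w, fderiv ℝ g x w⟫ := by
    intro x hx hdg
    have hline : HasDerivAt (fun t : ℝ => x + t • w) w 0 := by
      simpa using ((hasDerivAt_id (0 : ℝ)).smul_const w).const_add x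
    have hφ : HasDerivAt (fun t : ℝ => g (x + t • w)) (fderiv ℝ g x w) 0 := by
      have hdg' : HasFDerivAt g (fderiv ℝ g x) (x + (0 : ℝ) • w) := by
        simpa using hdg.hasFDerivAt
      exact hdg'.comp_hasDerivAt 0 hline
    have hslope := hasDerivAt_iff_tendsto_slope.mp hφ
    have hle : 𝓝[>] (0 : ℝ) ≤ 𝓝[≠] (0 : ℝ) :=
      nhdsWithin_mono 0 fun t ht => (ne_of_gt ht : t ≠ 0)
    have hslope' : Tendsto (fun t => ⟪w, slope (fun t : ℝ => g (x + t • w)) 0 t⟫)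
        (𝓝[>] (0 : ℝ)) (𝓝 ⟪w, fderiv ℝ g x w⟫) :=
      tendsto_const_nhds.inner (hslope.mono_left hle)
    have hmem : ∀ᶠ t in 𝓝 (0 : ℝ), x + t • w ∈ interior U := by
      have hcont : ContinuousAt (fun t : ℝ => x + t • w) 0 := hline.continuousAt
      have h0 : x + (0 : ℝ) • w ∈ interior U := by simpa using hx
      exact hcont (isOpen_interior.mem_nhds h0)
    have hev : ∀ᶠ t in 𝓝[>] (0 : ℝ),
        s * ‖w‖ ^ 2 ≤ ⟪w, slope (fun t : ℝ => g (x + t • w)) 0 t⟫ := by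
      filter_upwards [hmem.filter_mono nhdsWithin_le_nhds, self_mem_nhdsWithin]
        with t htU ht
      have ht : (0 : ℝ) < t := ht
      have h := mono x (interior_subset hx) (x + t • w) (interior_subset htU)
      have hsub : x + t • w - x = t • w := by abel
      rw [hsub] at h
      have hnorm : ‖t • w‖ = t * ‖w‖ := by
        rw [norm_smul, Real.norm_eq_abs, abs_of_pos ht]
      rw [hnorm, real_inner_smul_right] at h
      have hsl : slope (fun t : ℝ => g (x + t • w)) 0 t
          = t⁻¹ • (g (x + t • w) - g x) := by
        simp [slope, vsub_eq_sub]
      rw [hsl, real_inner_smul_right]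
      have hcomm : ⟪w, g (x + t • w) - g x⟫ = ⟪g (x + t • w) - g x, w⟫ :=
        real_inner_comm _ _
      rw [hcomm, le_inv_mul_iff₀ ht]
      nlinarith [h]
    exact ge_of_tendsto hslope' hev
  -- pass to the limit along the sequence
  have hevk : ∀ᶠ k in atTop, s * ‖w‖ ^ 2 ≤ ⟪w, fderiv ℝ g (xk k) w⟫ := by
    have hint : interior U ∈ 𝓝 xb := interior_mem_nhds.mpr hU
    filter_upwards [hxk.eventually_mem hint] with k hk
    exact key (xk k) hk (hdk k)
  have happ : Tendsto (fun k => ⟪w, fderiv ℝ g (xk k) w⟫) atTop (𝓝 ⟪w, H w⟫) := by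
    have hc : Continuous fun A : EuclideanSpace ℝ (Fin n) →L[ℝ] EuclideanSpace ℝ (Fin n)
        => A w := (ContinuousLinearMap.apply ℝ (EuclideanSpace ℝ (Fin n)) w).continuous
    exact tendsto_const_nhds.inner ((hc.tendsto H).comp hHk)
  exact ge_of_tendsto happ hevk
end

section
/- Let f : ℝⁿ → ℝ be C^{1,1} around x̄ and suppose there is a neighborhood U of x̄ such that for every x ∈ U, every matrix H in the Hessian bundle of f at x satisfies ⟨w, H w⟩ ≥ s‖w‖² with s > 0. Then f is strongly convex with modulus s on U (assumed convex), i.e., f(x') ≥ f(x) + ⟨∇f(x), x' − x⟩ + (s/2)‖x' − x‖² for all x, x' ∈ U. -/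
open Filter Topology
open scoped RealInnerProductSpace
open MeasureTheory intervalIntegral

lemma lipschitz_le_of_ae_deriv_nonneg {φ : ℝ → ℝ} {C : NNReal}
    (hφ : LipschitzWith C φ) {a b : ℝ} (hab : a ≤ b)
    (hae : ∀ᵐ t, t ∈ Set.Ioo a b → DifferentiableAt ℝ φ t ∧ 0 ≤ deriv φ t) :
    φ a ≤ φ b := by
  have hφc : Continuous φ := hφ.continuous
  set ε : ℕ → ℝ := fun k => 1 / ((k : ℝ) + 1) with hε
  have hεpos : ∀ k : ℕ, 0 < ε k := fun k => by positivity
  have hεtend : Tendsto ε atTop (𝓝 0) := tendsto_one_div_add_atTop_nhds_zero_nat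
  set F : ℕ → ℝ → ℝ := fun k t => ((k : ℝ) + 1) * (φ (t + ε k) - φ t) with hF
  have hkε : ∀ k : ℕ, ((k : ℝ) + 1) * ε k = 1 := fun k => by
    rw [hε]; field_simp
  have hint : ∀ (c d : ℝ), IntervalIntegrable φ volume c d :=
    fun c d => hφc.intervalIntegrable c d
  have hintc : ∀ (k : ℕ) (c d : ℝ), IntervalIntegrable (fun t => φ (t + ε k)) volume c d :=
    fun k c d => (hφc.comp (continuous_id.add continuous_const)).intervalIntegrable c d
  -- Step 1
  have step1 : ∀ k : ℕ, ∫ t in a..b, F k t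
      = ((k:ℝ)+1) * ((∫ t in b..(b + ε k), φ t) - ∫ t in a..(a + ε k), φ t) := by
    intro k
    have h1 : ∫ t in a..b, φ (t + ε k) = ∫ t in (a + ε k)..(b + ε k), φ t :=
      integral_comp_add_right φ (ε k)
    have h2 : (∫ t in a..(a + ε k), φ t) + ∫ t in (a + ε k)..(b + ε k), φ t
        = ∫ t in a..(b + ε k), φ t := integral_add_adjacent_intervals (hint _ _) (hint _ _)
    have h3 : (∫ t in a..b, φ t) + ∫ t in b..(b + ε k), φ t
        = ∫ t in a..(b + ε k), φ t := integral_add_adjacent_intervals (hint _ _) (hint _ _)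
    have h4 : ∫ t in a..b, F k t
        = ((k:ℝ)+1) * ((∫ t in a..b, φ (t + ε k)) - ∫ t in a..b, φ t) := by
      rw [← intervalIntegral.integral_sub (hintc k a b) (hint a b),
        ← intervalIntegral.integral_const_mul]
    rw [h4, h1]; nlinarith [h2, h3]
  -- Step 2 : endpoint limits
  have step2 : ∀ c : ℝ, Tendsto (fun k : ℕ => ((k:ℝ)+1) * ∫ t in c..(c + ε k), φ t)
      atTop (𝓝 (φ c)) := by
    intro c
    have key : ∀ k : ℕ, |((k:ℝ)+1) * (∫ t in c..(c + ε k), φ t) - φ c| ≤ C * ε k := by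
      intro k
      have e1 : ∫ t in c..(c + ε k), (φ t - φ c)
          = (∫ t in c..(c + ε k), φ t) - ε k * φ c := by
        rw [intervalIntegral.integral_sub (hint _ _) intervalIntegrable_const]
        simp [smul_eq_mul]
      have e2 : ‖∫ t in c..(c + ε k), (φ t - φ c)‖ ≤ (C * ε k) * |(c + ε k) - c| := by
        apply intervalIntegral.norm_integral_le_of_norm_le_const
        intro x hx
        rw [Set.uIoc_of_le (by linarith [hεpos k])] at hx
        have hxc : |x - c| ≤ ε k := by
          rcases hx with ⟨h1, h2⟩
          rw [abs_of_pos (by linarith)]; linarith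
        calc ‖φ x - φ c‖ = dist (φ x) (φ c) := by rw [dist_eq_norm]
          _ ≤ C * dist x c := hφ.dist_le_mul x c
          _ ≤ C * ε k := by
              rw [Real.dist_eq]
              exact mul_le_mul_of_nonneg_left hxc (by positivity)
      have e3 : |(c + ε k) - c| = ε k := by
        rw [abs_of_pos (by simpa using hεpos k)]; ring
      have e4 : ((k:ℝ)+1) * (∫ t in c..(c + ε k), φ t) - φ c
          = ((k:ℝ)+1) * ∫ t in c..(c + ε k), (φ t - φ c) := by
        rw [e1, mul_sub, ← mul_assoc, hkε k, one_mul]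
      rw [e4, abs_mul, abs_of_pos (by positivity : (0:ℝ) < (k:ℝ)+1)]
      rw [Real.norm_eq_abs, e3] at e2
      calc ((k:ℝ)+1) * |∫ t in c..(c + ε k), (φ t - φ c)|
          ≤ ((k:ℝ)+1) * ((C * ε k) * ε k) :=
            mul_le_mul_of_nonneg_left e2 (by positivity)
        _ = C * ε k := by
            rw [show ((k:ℝ)+1) * ((C * ε k) * ε k) = (((k:ℝ)+1) * ε k) * ((C:ℝ) * ε k) by ring,
              hkε k, one_mul]
    have hC : Tendsto (fun k : ℕ => (C : ℝ) * ε k) atTop (𝓝 ((C:ℝ) * 0)) :=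
      hεtend.const_mul _
    rw [mul_zero] at hC
    have hsq := squeeze_zero (fun k => abs_nonneg _) key hC
    apply tendsto_iff_dist_tendsto_zero.mpr
    simpa [Real.dist_eq] using hsq
  have key1 : Tendsto (fun k : ℕ => ∫ t in a..b, F k t) atTop (𝓝 (φ b - φ a)) := by
    simp only [step1]
    have heq : ∀ k : ℕ, ((k:ℝ)+1) * ((∫ t in b..(b + ε k), φ t) - ∫ t in a..(a + ε k), φ t)
        = ((k:ℝ)+1) * (∫ t in b..(b + ε k), φ t) - ((k:ℝ)+1) * ∫ t in a..(a + ε k), φ t :=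
      fun k => by ring
    simp only [heq]
    exact (step2 b).sub (step2 a)
  -- a.e. facts on the restricted measure
  have hbae : ∀ᵐ t ∂(volume.restrict (Set.Ioc a b)), t ∈ Set.Ioo a b := by
    rw [ae_restrict_iff' measurableSet_Ioc]
    have hb : ∀ᵐ t : ℝ, t ≠ b := by
      rw [MeasureTheory.ae_iff]
      have hset : {t : ℝ | ¬ t ≠ b} = {b} := by ext t; simp
      rw [hset]; exact Real.volume_singleton
    filter_upwards [hb] with t ht hIoc
    exact ⟨hIoc.1, lt_of_le_of_ne hIoc.2 ht⟩
  -- Step 3 : DCT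
  have hIoc : ∀ k : ℕ, ∫ t in a..b, F k t = ∫ t in Set.Ioc a b, F k t :=
    fun k => intervalIntegral.integral_of_le hab
  have key2 : Tendsto (fun k : ℕ => ∫ t in Set.Ioc a b, F k t) atTop
      (𝓝 (∫ t in Set.Ioc a b, deriv φ t)) := by
    apply MeasureTheory.tendsto_integral_of_dominated_convergence (fun _ => (C:ℝ))
    · intro k
      exact (continuous_const.mul
        ((hφc.comp (continuous_id.add continuous_const)).sub hφc)).aestronglyMeasurable
    · exact (integrableOn_const_iff).mpr (Or.inr measure_Ioc_lt_top)
    · intro k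
      refine Eventually.of_forall fun t => ?_
      have hd : dist (φ (t + ε k)) (φ t) ≤ C * ε k := by
        have := hφ.dist_le_mul (t + ε k) t
        simpa [Real.dist_eq, abs_of_pos (hεpos k)] using this
      rw [dist_eq_norm, Real.norm_eq_abs] at hd
      have : ‖F k t‖ = ((k:ℝ)+1) * |φ (t + ε k) - φ t| := by
        rw [hF]
        simp only [Real.norm_eq_abs, abs_mul, abs_of_pos (by positivity : (0:ℝ) < (k:ℝ)+1)]
      rw [this]
      calc ((k:ℝ)+1) * |φ (t + ε k) - φ t| ≤ ((k:ℝ)+1) * ((C:ℝ) * ε k) :=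
            mul_le_mul_of_nonneg_left hd (by positivity)
        _ = (C:ℝ) := by
            rw [show ((k:ℝ)+1) * ((C:ℝ) * ε k) = (((k:ℝ)+1) * ε k) * (C:ℝ) by ring,
              hkε k, one_mul]
    · filter_upwards [hbae, ae_restrict_of_ae hae] with t ht hae'
      obtain ⟨hdiff, -⟩ := hae' ht
      have hd : HasDerivAt φ (deriv φ t) t := hdiff.hasDerivAt
      rw [hasDerivAt_iff_tendsto_slope] at hd
      have hseq : Tendsto (fun k : ℕ => t + ε k) atTop (𝓝[≠] t) := by
        apply tendsto_nhdsWithin_of_tendsto_nhds_of_eventually_within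
        · simpa using (tendsto_const_nhds (x := t)).add hεtend
        · refine Eventually.of_forall fun k => ?_
          simp only [Set.mem_compl_iff, Set.mem_singleton_iff]
          intro h
          have h2 : ε k = 0 := by linarith [add_eq_left.mp h]
          exact absurd h2 (ne_of_gt (hεpos k))
      have hcomp := hd.comp hseq
      have heq : (fun k : ℕ => F k t) = slope φ t ∘ fun k => t + ε k := by
        funext k
        simp only [hF, Function.comp]
        rw [slope_def_field]
        have h1 : t + ε k - t = ε k := by ring
        rw [h1, eq_div_iff (ne_of_gt (hεpos k)), mul_right_comm, hkε k, one_mul]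
      rw [heq]
      exact hcomp
  simp only [hIoc] at key1
  have huniq : φ b - φ a = ∫ t in Set.Ioc a b, deriv φ t := tendsto_nhds_unique key1 key2
  have hpos : 0 ≤ ∫ t in Set.Ioc a b, deriv φ t := by
    apply MeasureTheory.integral_nonneg_of_ae
    filter_upwards [hbae, ae_restrict_of_ae hae] with t ht hae'
    exact (hae' ht).2
  linarith

lemma segment_ineq {n : ℕ} {f : EuclideanSpace ℝ (Fin n) → ℝ}
    {U : Set (EuclideanSpace ℝ (Fin n))} {K : NNReal}
    (hdiff : ∀ x ∈ U, HasGradientAt f (gradient f x) x)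
    (hlip : LipschitzOnWith K (gradient f) U)
    {s : ℝ} (hs : 0 < s)
    (hhess : ∀ x ∈ U, ∀ H ∈ hessBundle f x, ∀ w, s * ‖w‖ ^ 2 ≤ ⟪w, H w⟫)
    (z d : EuclideanSpace ℝ (Fin n))
    (hseg : ∀ t ∈ Set.Icc (0:ℝ) 1, z + t • d ∈ U)
    (hae : ∀ᵐ t : ℝ, t ∈ Set.Ioo (0:ℝ) 1 → DifferentiableAt ℝ (gradient f) (z + t • d)) :
    f z + ⟪gradient f z, d⟫ + (s / 2) * ‖d‖ ^ 2 ≤ f (z + d) := by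
  classical
  set cl : ℝ → ℝ := fun t => max 0 (min t 1) with hcl
  have hcl_mem : ∀ t, cl t ∈ Set.Icc (0:ℝ) 1 :=
    fun t => ⟨le_max_left _ _, max_le (by norm_num) (min_le_right _ _)⟩
  have hcl_id : ∀ t ∈ Set.Icc (0:ℝ) 1, cl t = t := fun t ht => by
    rw [hcl]; simp only
    rw [min_eq_left ht.2, max_eq_right ht.1]
  have hcl_lip : LipschitzWith 1 cl := (LipschitzWith.id.min_const 1).const_max 0
  set p : ℝ → EuclideanSpace ℝ (Fin n) := fun t => z + cl t • d with hp
  have hpU : ∀ t, p t ∈ U := fun t => hseg _ (hcl_mem t)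
  have hpdist : ∀ a b : ℝ, dist (p a) (p b) ≤ |a - b| * ‖d‖ := by
    intro a b
    have h1 : p a - p b = (cl a - cl b) • d := by
      rw [hp]; simp only; rw [sub_smul]; abel
    rw [dist_eq_norm, h1, norm_smul, Real.norm_eq_abs]
    have h2 : |cl a - cl b| ≤ |a - b| := by
      have := hcl_lip.dist_le_mul a b
      simpa [Real.dist_eq] using this
    exact mul_le_mul_of_nonneg_right h2 (norm_nonneg d)
  set ψ : ℝ → ℝ := fun t => ⟪gradient f (p t), d⟫ with hψ
  have hψlip : LipschitzWith (K * (‖d‖₊ * ‖d‖₊)) ψ := by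
    apply LipschitzWith.of_dist_le_mul
    intro a b
    have h1 : dist (ψ a) (ψ b) = |⟪gradient f (p a) - gradient f (p b), d⟫| := by
      rw [Real.dist_eq, hψ]; simp only; rw [inner_sub_left]
    rw [h1]
    calc |⟪gradient f (p a) - gradient f (p b), d⟫|
        ≤ ‖gradient f (p a) - gradient f (p b)‖ * ‖d‖ := abs_real_inner_le_norm _ _
      _ = dist (gradient f (p a)) (gradient f (p b)) * ‖d‖ := by rw [dist_eq_norm]
      _ ≤ (K * dist (p a) (p b)) * ‖d‖ := by
          have := hlip.dist_le_mul _ (hpU a) _ (hpU b)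
          exact mul_le_mul_of_nonneg_right this (norm_nonneg d)
      _ ≤ (K * (|a - b| * ‖d‖)) * ‖d‖ := by
          have := hpdist a b
          gcongr
      _ = ↑(K * (‖d‖₊ * ‖d‖₊)) * dist a b := by
          push_cast [Real.dist_eq]
          ring
  -- derivative of ψ at good interior points
  have hψderiv : ∀ t ∈ Set.Ioo (0:ℝ) 1, DifferentiableAt ℝ (gradient f) (z + t • d) →
      HasDerivAt ψ ⟪fderiv ℝ (gradient f) (z + t • d) d, d⟫ t := by
    intro t ht hdA
    have hline : HasDerivAt (fun r : ℝ => z + r • d) d t := by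
      simpa using ((hasDerivAt_id t).smul_const d).const_add z
    have hg : HasDerivAt (fun r : ℝ => gradient f (z + r • d))
        (fderiv ℝ (gradient f) (z + t • d) d) t :=
      by have h := hdA.hasFDerivAt.comp_hasDerivAt t hline; exact h
    have hinner := hg.inner ℝ (hasDerivAt_const t d)
    rw [inner_zero_right, zero_add] at hinner
    apply hinner.congr_of_eventuallyEq
    filter_upwards [Ioo_mem_nhds ht.1 ht.2] with r hr
    rw [hψ]; simp only [hp]
    rw [hcl_id r (Set.mem_Icc_of_Ioo hr)]
  -- pointwise lower bound on ψ
  have hψlb : ∀ t0 ∈ Set.Icc (0:ℝ) 1, ψ 0 + t0 * (s * ‖d‖ ^ 2) ≤ ψ t0 := by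
    intro t0 ht0
    set c : ℝ := s * ‖d‖ ^ 2 with hc
    have hc0 : 0 ≤ c := by positivity
    set φ : ℝ → ℝ := fun t => ψ t - t * c with hφ
    have hφlip : LipschitzWith (K * (‖d‖₊ * ‖d‖₊) + c.toNNReal) φ := by
      apply LipschitzWith.sub hψlip
      apply LipschitzWith.of_dist_le_mul
      intro a b
      rw [Real.dist_eq, Real.dist_eq, ← sub_mul, abs_mul, abs_of_nonneg hc0,
        Real.coe_toNNReal _ hc0]
      ring_nf
      exact le_refl _
    have hφae : ∀ᵐ t : ℝ, t ∈ Set.Ioo 0 t0 → DifferentiableAt ℝ φ t ∧ 0 ≤ deriv φ t := by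
      filter_upwards [hae] with t hgood htIoo
      have htIoo1 : t ∈ Set.Ioo (0:ℝ) 1 := ⟨htIoo.1, lt_of_lt_of_le htIoo.2 ht0.2⟩
      have hdA := hgood htIoo1
      have hψd := hψderiv t htIoo1 hdA
      have hφd : HasDerivAt φ (⟪fderiv ℝ (gradient f) (z + t • d) d, d⟫ - c) t :=
        hψd.sub (hasDerivAt_mul_const c)
      refine ⟨hφd.differentiableAt, ?_⟩
      rw [hφd.deriv]
      have hmem : fderiv ℝ (gradient f) (z + t • d) ∈ hessBundle f (z + t • d) :=
        ⟨fun _ => z + t • d, tendsto_const_nhds, fun _ => hdA, tendsto_const_nhds⟩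
      have := hhess (z + t • d) (hseg t (Set.mem_Icc_of_Ioo htIoo1)) _ hmem d
      rw [real_inner_comm] at this
      rw [hc]
      linarith
    have := lipschitz_le_of_ae_deriv_nonneg hφlip ht0.1 hφae
    rw [hφ] at this; simp only at this
    linarith [this]
  -- FTC
  have hFTC : ∫ t in (0:ℝ)..1, ψ t = f (z + d) - f z := by
    have hder : ∀ t ∈ Set.uIcc (0:ℝ) 1, HasDerivAt (fun r : ℝ => f (z + r • d)) (ψ t) t := by
      intro t ht
      rw [Set.uIcc_of_le (by norm_num : (0:ℝ) ≤ 1)] at ht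
      have hgrad := hdiff (z + t • d) (hseg t ht)
      have hline : HasDerivAt (fun r : ℝ => z + r • d) d t := by
        simpa using ((hasDerivAt_id t).smul_const d).const_add z
      have hcomp := hgrad.hasFDerivAt.comp_hasDerivAt t hline
      have heq : (InnerProductSpace.toDual ℝ _ (gradient f (z + t • d))) d = ψ t := by
        rw [InnerProductSpace.toDual_apply_apply, hψ]
        simp only [hp]
        rw [hcl_id t ht]
      rw [heq] at hcomp
      exact hcomp
    have := intervalIntegral.integral_eq_sub_of_hasDerivAt hder
      (hψlip.continuous.intervalIntegrable 0 1)
    rw [this]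
    norm_num
  -- integrate the lower bound
  have hmono : (∫ t in (0:ℝ)..1, (ψ 0 + t * (s * ‖d‖ ^ 2)))
      ≤ ∫ t in (0:ℝ)..1, ψ t := by
    apply intervalIntegral.integral_mono_on (by norm_num)
    · exact (continuous_const.add (continuous_id.mul continuous_const)).intervalIntegrable 0 1
    · exact hψlip.continuous.intervalIntegrable 0 1
    · exact fun t ht => hψlb t ht
  have hint2 : IntervalIntegrable (fun t : ℝ => t * (s * ‖d‖ ^ 2)) volume 0 1 :=
    (continuous_id.mul continuous_const).intervalIntegrable 0 1
  have hval : (∫ t in (0:ℝ)..1, (ψ 0 + t * (s * ‖d‖ ^ 2)))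
      = ψ 0 + s / 2 * ‖d‖ ^ 2 := by
    rw [intervalIntegral.integral_add intervalIntegrable_const hint2,
      intervalIntegral.integral_const]
    have hmc : (∫ t in (0:ℝ)..1, t * (s * ‖d‖ ^ 2)) = (∫ t in (0:ℝ)..1, t) * (s * ‖d‖ ^ 2) :=
      intervalIntegral.integral_mul_const _ _
    rw [hmc, integral_id]
    simp [smul_eq_mul]
    ring
  have hψ0 : ψ 0 = ⟪gradient f z, d⟫ := by
    rw [hψ]; simp only [hp]
    have : cl 0 = 0 := hcl_id 0 (by norm_num)
    rw [this, zero_smul, add_zero]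
  linarith [hmono, hFTC, hval, hψ0.le, hψ0.ge]

lemma shear_good {n : ℕ} {N : Set (EuclideanSpace ℝ (Fin n))} (hN : volume N = 0)
    (d : EuclideanSpace ℝ (Fin n)) :
    ∀ᵐ z : EuclideanSpace ℝ (Fin n), ∀ᵐ t : ℝ, z + t • d ∉ N := by
  set N' := toMeasurable volume N with hN'def
  have hN' : volume N' = 0 := by rwa [measure_toMeasurable]
  have hN'm : MeasurableSet N' := measurableSet_toMeasurable _ _
  have hmap2 : Measurable (fun q : EuclideanSpace ℝ (Fin n) × ℝ => q.1 + q.2 • d) := by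
    fun_prop
  set S2 : Set (EuclideanSpace ℝ (Fin n) × ℝ) :=
    (fun q : EuclideanSpace ℝ (Fin n) × ℝ => q.1 + q.2 • d) ⁻¹' N' with hS2def
  have hS2m : MeasurableSet S2 := hmap2 hN'm
  have hS2 : ((volume : Measure (EuclideanSpace ℝ (Fin n))).prod volume) S2 = 0 := by
    rw [Measure.prod_apply_symm hS2m]
    have hsec : ∀ t : ℝ, volume ((fun w => (w, t)) ⁻¹' S2) = 0 := by
      intro t
      have heq : (fun w => (w, t)) ⁻¹' S2 = (fun w => w + t • d) ⁻¹' N' := rfl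
      rw [heq, measure_preimage_add_right]
      exact hN'
    simp [hsec]
  have hae2 : ∀ᵐ q ∂((volume : Measure (EuclideanSpace ℝ (Fin n))).prod (volume : Measure ℝ)),
      q.1 + q.2 • d ∉ N' := by
    rw [ae_iff]
    have : {q : EuclideanSpace ℝ (Fin n) × ℝ | ¬ q.1 + q.2 • d ∉ N'} = S2 := by
      ext q; simp [hS2def]
    rw [this]
    exact hS2
  filter_upwards [Measure.ae_ae_of_ae_prod hae2] with z hz
  filter_upwards [hz] with t ht
  exact fun hmem => ht (subset_toMeasurable volume N hmem)

/-- If `f` is `C^{1,1}` around `x̄` and on a convex neighborhood `U` of `x̄` every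
member of the Hessian bundle at every point of `U` is positive-definite with modulus
`s > 0`, then `f` is strongly convex with modulus `s` on `U`. -/
theorem stmt13 (n : ℕ) (f : EuclideanSpace ℝ (Fin n) → ℝ)
    (xb : EuclideanSpace ℝ (Fin n))
    (U : Set (EuclideanSpace ℝ (Fin n))) (hU : U ∈ 𝓝 xb) (hUconv : Convex ℝ U)
    (K : NNReal)
    (hdiff : ∀ x ∈ U, HasGradientAt f (gradient f x) x)
    (hlip : LipschitzOnWith K (gradient f) U)
    (s : ℝ) (hs : 0 < s)
    (hhess : ∀ x ∈ U, ∀ H ∈ hessBundle f x, ∀ w, s * ‖w‖ ^ 2 ≤ ⟪w, H w⟫) :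
    ∀ x ∈ U, ∀ x' ∈ U,
      f x + ⟪gradient f x, x' - x⟫ + (s / 2) * ‖x' - x‖ ^ 2 ≤ f x' := by
  intro x hx x' hx'
  have hxbint : xb ∈ interior U := mem_interior_iff_mem_nhds.mpr hU
  -- Rademacher's theorem, applied to the Lipschitz gradient
  have hrad : ∀ᵐ z : EuclideanSpace ℝ (Fin n),
      z ∈ U → DifferentiableWithinAt ℝ (gradient f) U z :=
    hlip.ae_differentiableWithinAt_of_mem
  set N : Set (EuclideanSpace ℝ (Fin n)) :=
    {z | ¬ (z ∈ U → DifferentiableWithinAt ℝ (gradient f) U z)} with hNdef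
  have hNnull : volume N = 0 := by
    rw [hNdef]
    rw [MeasureTheory.ae_iff] at hrad
    exact hrad
  -- Approximation step
  have key : ∀ ε > (0:ℝ), ∃ u v : EuclideanSpace ℝ (Fin n), u ∈ U ∧ v ∈ U ∧
      dist u x < ε ∧ dist v x' < ε ∧
      f u + ⟪gradient f u, v - u⟫ + (s/2) * ‖v - u‖^2 ≤ f v := by
    intro ε hε
    set R : ℝ := dist xb x + dist xb x' + 1 with hRdef
    have hRpos : 0 < R := by positivity
    set θ : ℝ := min (ε / (2 * R)) 1 with hθdef
    have hθpos : 0 < θ := lt_min (by positivity) one_pos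
    have hθ1 : θ ≤ 1 := min_le_right _ _
    have hθbound : ∀ y : EuclideanSpace ℝ (Fin n), dist xb y ≤ R → θ * dist xb y ≤ ε / 2 := by
      intro y hy
      calc θ * dist xb y ≤ (ε / (2 * R)) * R :=
            mul_le_mul (min_le_left _ _) hy dist_nonneg (by positivity)
        _ = ε / 2 := by field_simp
    set u₀ : EuclideanSpace ℝ (Fin n) := x + θ • (xb - x) with hu₀
    set v₀ : EuclideanSpace ℝ (Fin n) := x' + θ • (xb - x') with hv₀
    have hu₀int : u₀ ∈ interior U :=
      hUconv.add_smul_sub_mem_interior hx hxbint ⟨hθpos, hθ1⟩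
    have hv₀int : v₀ ∈ interior U :=
      hUconv.add_smul_sub_mem_interior hx' hxbint ⟨hθpos, hθ1⟩
    have hdu₀ : dist u₀ x ≤ ε / 2 := by
      have h1 : dist u₀ x = θ * dist xb x := by
        rw [hu₀, dist_eq_norm, add_sub_cancel_left, norm_smul, Real.norm_eq_abs,
          abs_of_pos hθpos, dist_eq_norm]
      rw [h1]
      exact hθbound x (by rw [hRdef]; linarith [dist_nonneg (x := xb) (y := x')])
    have hdv₀ : dist v₀ x' ≤ ε / 2 := by
      have h1 : dist v₀ x' = θ * dist xb x' := by
        rw [hv₀, dist_eq_norm, add_sub_cancel_left, norm_smul, Real.norm_eq_abs,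
          abs_of_pos hθpos, dist_eq_norm]
      rw [h1]
      exact hθbound x' (by rw [hRdef]; linarith [dist_nonneg (x := xb) (y := x)])
    set d : EuclideanSpace ℝ (Fin n) := v₀ - u₀ with hd
    obtain ⟨δ1, hδ1pos, hδ1⟩ := Metric.isOpen_iff.mp isOpen_interior u₀ hu₀int
    obtain ⟨δ2, hδ2pos, hδ2⟩ := Metric.isOpen_iff.mp isOpen_interior v₀ hv₀int
    set δ : ℝ := min (min δ1 δ2) (ε / 4) with hδdef
    have hδpos : 0 < δ := lt_min (lt_min hδ1pos hδ2pos) (by positivity)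
    -- pick a good shear point
    have hshear := shear_good hNnull d
    obtain ⟨z, hzball, hzgood⟩ :
        ∃ z, z ∈ Metric.ball u₀ δ ∧ (∀ᵐ t : ℝ, z + t • d ∉ N) := by
      by_contra hcon
      push_neg at hcon
      have hsub : Metric.ball u₀ δ ⊆ {z | ¬ (∀ᵐ t : ℝ, z + t • d ∉ N)} :=
        fun z hz => hcon z hz
      have hnull : volume {z : EuclideanSpace ℝ (Fin n) | ¬ (∀ᵐ t : ℝ, z + t • d ∉ N)} = 0 := by
        rw [MeasureTheory.ae_iff] at hshear
        exact hshear
      have := measure_mono_null hsub hnull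
      exact absurd this (ne_of_gt (Metric.measure_ball_pos _ _ hδpos))
    have hzint : z ∈ interior U := hδ1 (by
      refine Metric.mem_ball.mpr ?_
      have := Metric.mem_ball.mp hzball
      calc dist z u₀ < δ := this
        _ ≤ δ1 := le_trans (min_le_left _ _) (min_le_left _ _))
    have hzdint : z + d ∈ interior U := hδ2 (by
      refine Metric.mem_ball.mpr ?_
      have h1 : dist (z + d) v₀ = dist z u₀ := by
        rw [hd]
        rw [dist_eq_norm, dist_eq_norm]
        congr 1
        abel
      rw [h1]
      calc dist z u₀ < δ := Metric.mem_ball.mp hzball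
        _ ≤ δ2 := le_trans (min_le_left _ _) (min_le_right _ _))
    have hsegint : ∀ t ∈ Set.Icc (0:ℝ) 1, z + t • d ∈ interior U := by
      intro t ht
      have := (hUconv.interior).add_smul_sub_mem hzint hzdint ht
      rwa [add_sub_cancel_left] at this
    have hseg : ∀ t ∈ Set.Icc (0:ℝ) 1, z + t • d ∈ U :=
      fun t ht => interior_subset (hsegint t ht)
    have hae : ∀ᵐ t : ℝ, t ∈ Set.Ioo (0:ℝ) 1 → DifferentiableAt ℝ (gradient f) (z + t • d) := by
      filter_upwards [hzgood] with t ht htIoo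
      have hmem : z + t • d ∈ interior U := hsegint t (Set.mem_Icc_of_Ioo htIoo)
      have hdw : DifferentiableWithinAt ℝ (gradient f) U (z + t • d) := by
        by_contra hcon
        exact ht (fun himp => hcon (himp (interior_subset hmem)))
      exact hdw.differentiableAt (mem_interior_iff_mem_nhds.mp hmem)
    have hineq := segment_ineq hdiff hlip hs hhess z d hseg hae
    refine ⟨z, z + d, interior_subset hzint, interior_subset hzdint, ?_, ?_, ?_⟩
    · calc dist z x ≤ dist z u₀ + dist u₀ x := dist_triangle _ _ _
        _ < δ + ε / 2 := add_lt_add_of_lt_of_le (Metric.mem_ball.mp hzball) hdu₀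
        _ ≤ ε / 4 + ε / 2 := by
            have : δ ≤ ε / 4 := min_le_right _ _
            linarith
        _ < ε := by linarith
    · have h1 : dist (z + d) v₀ = dist z u₀ := by
        rw [hd, dist_eq_norm, dist_eq_norm]; congr 1; abel
      calc dist (z + d) x' ≤ dist (z + d) v₀ + dist v₀ x' := dist_triangle _ _ _
        _ < δ + ε / 2 := by rw [h1]; exact add_lt_add_of_lt_of_le (Metric.mem_ball.mp hzball) hdv₀
        _ ≤ ε / 4 + ε / 2 := by
            have : δ ≤ ε / 4 := min_le_right _ _
            linarith
        _ < ε := by linarith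
    · have h2 : z + d - z = d := by abel
      rw [h2]
      exact hineq
  -- take limits
  have hex : ∀ k : ℕ, ∃ u v : EuclideanSpace ℝ (Fin n), u ∈ U ∧ v ∈ U ∧
      dist u x < 1 / ((k:ℝ)+1) ∧ dist v x' < 1 / ((k:ℝ)+1) ∧
      f u + ⟪gradient f u, v - u⟫ + (s/2) * ‖v - u‖^2 ≤ f v :=
    fun k => key _ (by positivity)
  choose u v huU hvU hux hvx' hineq using hex
  have hεtend : Tendsto (fun k : ℕ => 1 / ((k:ℝ)+1)) atTop (𝓝 0) :=
    tendsto_one_div_add_atTop_nhds_zero_nat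
  have hutend : Tendsto u atTop (𝓝 x) := by
    rw [tendsto_iff_dist_tendsto_zero]
    exact squeeze_zero (fun k => dist_nonneg) (fun k => le_of_lt (hux k)) hεtend
  have hvtend : Tendsto v atTop (𝓝 x') := by
    rw [tendsto_iff_dist_tendsto_zero]
    exact squeeze_zero (fun k => dist_nonneg) (fun k => le_of_lt (hvx' k)) hεtend
  have hfu : Tendsto (fun k => f (u k)) atTop (𝓝 (f x)) :=
    ((hdiff x hx).differentiableAt.continuousAt.tendsto).comp hutend
  have hfv : Tendsto (fun k => f (v k)) atTop (𝓝 (f x')) :=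
    ((hdiff x' hx').differentiableAt.continuousAt.tendsto).comp hvtend
  have hgradtend : Tendsto (fun k => gradient f (u k)) atTop (𝓝 (gradient f x)) := by
    rw [tendsto_iff_dist_tendsto_zero]
    have hb : ∀ k, dist (gradient f (u k)) (gradient f x) ≤ K * dist (u k) x :=
      fun k => hlip.dist_le_mul _ (huU k) _ hx
    have hK : Tendsto (fun k => (K:ℝ) * dist (u k) x) atTop (𝓝 ((K:ℝ) * 0)) :=
      (tendsto_iff_dist_tendsto_zero.mp hutend).const_mul _
    rw [mul_zero] at hK
    exact squeeze_zero (fun k => dist_nonneg) hb hK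
  have hsub : Tendsto (fun k => v k - u k) atTop (𝓝 (x' - x)) := hvtend.sub hutend
  have hinner : Tendsto (fun k => ⟪gradient f (u k), v k - u k⟫) atTop
      (𝓝 ⟪gradient f x, x' - x⟫) := hgradtend.inner hsub
  have hnorm2 : Tendsto (fun k => ‖v k - u k‖^2) atTop (𝓝 (‖x' - x‖^2)) :=
    (hsub.norm).pow 2
  have hLHS : Tendsto (fun k => f (u k) + ⟪gradient f (u k), v k - u k⟫
      + (s/2) * ‖v k - u k‖^2) atTop
      (𝓝 (f x + ⟪gradient f x, x' - x⟫ + (s/2) * ‖x' - x‖^2)) :=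
    (hfu.add hinner).add (hnorm2.const_mul _)
  exact le_of_tendsto_of_tendsto' hLHS hfv hineq
end

section
/- Let f : ℝⁿ → ℝ be C^{1,1} around x̄ and suppose every matrix H in the Hessian bundle of f at x̄ is positive-definite with modulus μ > s > 0. Then there is a neighborhood U of x̄ such that for every x ∈ U and every H in the Hessian bundle of f at x, ⟨w, H w⟩ ≥ s‖w‖² for all w. -/
open Filter Topology
open scoped RealInnerProductSpace

/-- If `f` is `C^{1,1}` around `x̄` and every member of the Hessian bundle of `f` at
`x̄` is positive-definite with modulus `μ > s > 0`, then on some neighborhood of `x̄`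
every member of the Hessian bundle at every point is positive-definite with modulus
`s`. -/
theorem stmt14 (n : ℕ) (f : EuclideanSpace ℝ (Fin n) → ℝ)
    (xb : EuclideanSpace ℝ (Fin n))
    (U : Set (EuclideanSpace ℝ (Fin n))) (hU : U ∈ 𝓝 xb) (K : NNReal)
    (hdiff : ∀ x ∈ U, HasGradientAt f (gradient f x) x)
    (hlip : LipschitzOnWith K (gradient f) U)
    (s μ : ℝ) (hs : 0 < s) (hμs : s < μ)
    (hhess : ∀ H ∈ hessBundle f xb, ∀ w, μ * ‖w‖ ^ 2 ≤ ⟪w, H w⟫) :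
    ∃ V ∈ 𝓝 xb, ∀ x ∈ V, ∀ H ∈ hessBundle f x, ∀ w, s * ‖w‖ ^ 2 ≤ ⟪w, H w⟫ := by
  classical
  by_contra hcon
  push_neg at hcon
  -- Step 1: for each k, find a differentiability point y near xb and a unit vector w
  -- with ⟪w, ∇²f(y) w⟫ < s.
  have key : ∀ k : ℕ, ∃ y : EuclideanSpace ℝ (Fin n), ∃ w : EuclideanSpace ℝ (Fin n),
      dist y xb < 2 / (k + 1) ∧ DifferentiableAt ℝ (gradient f) y ∧ ‖w‖ = 1 ∧
      ⟪w, fderiv ℝ (gradient f) y w⟫ < s := by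
    intro k
    have hpos : (0 : ℝ) < 1 / (k + 1) := by positivity
    obtain ⟨x, hx, H, hH, w, hw⟩ := hcon (Metric.ball xb (1 / (k + 1)))
      (Metric.ball_mem_nhds _ hpos)
    have hw0 : w ≠ 0 := by
      rintro rfl
      simp at hw
    have hwn : (0 : ℝ) < ‖w‖ := norm_pos_iff.2 hw0
    set u := ‖w‖⁻¹ • w with hu_def
    have hu : ‖u‖ = 1 := by
      rw [hu_def, norm_smul]
      simp [abs_of_pos (inv_pos.2 hwn)]
      field_simp
    have hqu : ∀ A : EuclideanSpace ℝ (Fin n) →L[ℝ] EuclideanSpace ℝ (Fin n),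
        ⟪u, A u⟫ = ‖w‖⁻¹ ^ 2 * ⟪w, A w⟫ := by
      intro A
      rw [hu_def, map_smul, real_inner_smul_left, real_inner_smul_right]
      ring
    have hltH : ⟪u, H u⟫ < s := by
      rw [hqu]
      have h1 : ‖w‖⁻¹ ^ 2 * ⟪w, H w⟫ < ‖w‖⁻¹ ^ 2 * (s * ‖w‖ ^ 2) := by
        apply mul_lt_mul_of_pos_left hw (by positivity)
      have h2 : ‖w‖⁻¹ ^ 2 * (s * ‖w‖ ^ 2) = s := by
        field_simp
      linarith
    obtain ⟨zk, hz1, hz2, hz3⟩ := hH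
    -- along the sequence zk, eventually zk j ∈ ball xb (2/(k+1)) and the quadratic
    -- form at zk j applied to u is < s.
    have hxball : x ∈ Metric.ball xb (2 / (k + 1)) := by
      rw [Metric.mem_ball] at hx ⊢
      have : (1 : ℝ) / (k + 1) ≤ 2 / (k + 1) := by
        apply div_le_div_of_nonneg_right (by norm_num) (by positivity)
      linarith
    have ev1 : ∀ᶠ j in atTop, zk j ∈ Metric.ball xb (2 / (k + 1)) :=
      hz1.eventually (Metric.isOpen_ball.mem_nhds hxball)
    have hcont : Continuous fun A : EuclideanSpace ℝ (Fin n) →L[ℝ]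
        EuclideanSpace ℝ (Fin n) => ⟪u, A u⟫ :=
      Continuous.inner continuous_const ((ContinuousLinearMap.apply ℝ _ u).continuous)
    have ev2 : ∀ᶠ j in atTop, ⟪u, fderiv ℝ (gradient f) (zk j) u⟫ < s :=
      (((hcont.tendsto H).comp hz3).eventually_lt_const hltH)
    obtain ⟨j, hj1, hj2⟩ := (ev1.and ev2).exists
    exact ⟨zk j, u, Metric.mem_ball.1 hj1, hz2 j, hu, hj2⟩
  choose y w hdist hdiffy hnorm hlt using key
  -- Step 2: y k → xb.
  have hy : Tendsto y atTop (𝓝 xb) := by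
    rw [tendsto_iff_dist_tendsto_zero]
    apply squeeze_zero (fun k => dist_nonneg) (fun k => (hdist k).le)
    have h2 : Tendsto (fun k : ℕ => 2 / ((k : ℝ) + 1)) atTop (𝓝 0) := by
      apply Tendsto.div_atTop tendsto_const_nhds
      exact tendsto_atTop_add_const_right _ _ tendsto_natCast_atTop_atTop
    exact h2
  -- Step 3: eventually y k ∈ interior U, giving a norm bound on the Hessians.
  have hintU : interior U ∈ 𝓝 xb := interior_mem_nhds.2 hU
  obtain ⟨N, hN⟩ := (eventually_atTop.1 (hy.eventually hintU))
  have hbound : ∀ k : ℕ, ‖fderiv ℝ (gradient f) (y (k + N))‖ ≤ K := by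
    intro k
    exact norm_fderiv_le_of_lipschitzOn ℝ
      (isOpen_interior.mem_nhds (hN (k + N) (Nat.le_add_left _ _)))
      (hlip.mono interior_subset)
  -- Step 4: extract a convergent subsequence of (Hessian, unit vector) pairs.
  set B : ℕ → (EuclideanSpace ℝ (Fin n) →L[ℝ] EuclideanSpace ℝ (Fin n)) ×
      EuclideanSpace ℝ (Fin n) :=
    fun k => (fderiv ℝ (gradient f) (y (k + N)), w (k + N)) with hB_def
  have hcpt : IsCompact ((Metric.closedBall
      (0 : EuclideanSpace ℝ (Fin n) →L[ℝ] EuclideanSpace ℝ (Fin n)) K) ×ˢ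
      (Metric.sphere (0 : EuclideanSpace ℝ (Fin n)) 1)) :=
    (isCompact_closedBall _ _).prod (isCompact_sphere _ _)
  have hBmem : ∀ k, B k ∈ (Metric.closedBall
      (0 : EuclideanSpace ℝ (Fin n) →L[ℝ] EuclideanSpace ℝ (Fin n)) K) ×ˢ
      (Metric.sphere (0 : EuclideanSpace ℝ (Fin n)) 1) := by
    intro k
    constructor
    · rw [Metric.mem_closedBall, dist_zero_right]; exact hbound k
    · rw [Metric.mem_sphere, dist_zero_right]; exact hnorm (k + N)
  obtain ⟨⟨A, u⟩, hmem, φ, hφ, hconv⟩ := hcpt.tendsto_subseq hBmem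
  have hA : Tendsto (fun k => (B (φ k)).1) atTop (𝓝 A) :=
    (continuous_fst.tendsto _).comp hconv
  -- Step 5: A belongs to the Hessian bundle at xb.
  have hAmem : A ∈ hessBundle f xb := by
    refine ⟨fun k => y (φ k + N), ?_, fun k => hdiffy _, hA⟩
    exact hy.comp (tendsto_atTop_mono (fun k => Nat.le_add_right _ _)
      (tendsto_atTop_mono (fun k => hφ.id_le k) tendsto_id))
  have hμ := hhess A hAmem u
  have hu1 : ‖u‖ = 1 := by
    have := hmem.2
    rwa [Metric.mem_sphere, dist_zero_right] at this
  -- Step 6: ⟪u, A u⟫ ≤ s by passing to the limit.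
  have hcontg : Continuous fun p : (EuclideanSpace ℝ (Fin n) →L[ℝ]
      EuclideanSpace ℝ (Fin n)) × EuclideanSpace ℝ (Fin n) => ⟪p.2, p.1 p.2⟫ :=
    Continuous.inner continuous_snd (isBoundedBilinearMap_apply.continuous)
  have hgt : Tendsto (fun k => ⟪(B (φ k)).2, (B (φ k)).1 (B (φ k)).2⟫)
      atTop (𝓝 ⟪u, A u⟫) := (hcontg.tendsto (A, u)).comp hconv
  have hle : ⟪u, A u⟫ ≤ s :=
    le_of_tendsto hgt (Eventually.of_forall fun k => (hlt (φ k + N)).le)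
  rw [hu1, one_pow, mul_one] at hμ
  linarith
end
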